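/- Let I ⊂ k[x_1,…,x_n] be a critical ideal of Northcott type, generated by f_1,…,f_{n-1}, D where (f_1,…,f_{n-1})ᵀ = Φ·mᵀ, D = det(Φ), Φ is the Northcott matrix with monomial entries and m = (x_1^{u_{21}},…,x_{n-2}^{u_{n-1,n-2}}, x_{n-1}^{u_{1,n-1}}). Then ⟨f_1,…,f_{n-1}⟩ = I ∩ ⟨m⟩, where ⟨m⟩ is the monomial ideal generated by the entries of m. -/

import Mathlib

open MvPolynomial

/-- `σ` : the cycle `(1 2 ⋯ n−1)` in 0-based indexing on `{0,…,n-2}`. -/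
def ntSig (n i : ℕ) : ℕ := if i = n - 2 then 0 else i + 1

/-- `σ⁻¹` in 0-based indexing on `{0,…,n-2}`. -/
def ntTau (n i : ℕ) : ℕ := if i = 0 then n - 2 else i - 1

/-- The Northcott binomial `f_i = x_i^{u_{ni}+u_{σ(i),i}} − x_{σ⁻¹(i)}^{u_{i,σ⁻¹(i)}} x_n^{u_{in}}`
(0-based: index `n-1` plays the role of the paper's `n`). -/
noncomputable def ntF (K : Type*) [Field K] (n : ℕ) (hn : 3 ≤ n) (u : ℕ → ℕ → ℕ)
    (i : Fin (n - 1)) : MvPolynomial (Fin n) K :=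
  X (⟨(i : ℕ), by have := i.isLt; omega⟩ : Fin n) ^ (u (n - 1) i + u (ntSig n i) i)
    - X (⟨ntTau n i, by have := i.isLt; unfold ntTau; split <;> omega⟩ : Fin n) ^ (u i (ntTau n i))
      * X (⟨n - 1, by omega⟩ : Fin n) ^ (u i (n - 1))

/-- The Northcott binomial `D = x_1^{u_{n1}}⋯x_{n-1}^{u_{n,n-1}} − x_n^{∑ u_{in}}`. -/
noncomputable def ntD (K : Type*) [Field K] (n : ℕ) (hn : 3 ≤ n) (u : ℕ → ℕ → ℕ) :
    MvPolynomial (Fin n) K :=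
  (∏ i : Fin (n - 1), X (⟨(i : ℕ), by have := i.isLt; omega⟩ : Fin n) ^ (u (n - 1) i))
    - X (⟨n - 1, by omega⟩ : Fin n) ^ (∑ i : Fin (n - 1), u (i : ℕ) (n - 1))

/-- The critical ideal of Northcott type `⟨f_1,…,f_{n-1},D⟩`. -/
noncomputable def ntIdeal (K : Type*) [Field K] (n : ℕ) (hn : 3 ≤ n) (u : ℕ → ℕ → ℕ) :
    Ideal (MvPolynomial (Fin n) K) :=
  Ideal.span (Set.range (ntF K n hn u) ∪ {ntD K n hn u})

/-- Positivity of the relevant exponents `u_{ij} > 0`. -/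
def ntPos (n : ℕ) (u : ℕ → ℕ → ℕ) : Prop :=
  ∀ i, i < n - 1 → 0 < u (n - 1) i ∧ 0 < u i (n - 1) ∧ 0 < u i (ntTau n i) ∧ 0 < u (ntSig n i) i

-- ================= auxiliary development =================
section Aux
open Fin.NatCast Fin.CommRing
variable {K : Type*} [Field K] {n : ℕ}

/-- embedding `Fin (n-1) → Fin n` -/
def ntEmb {n : ℕ} (i : Fin (n - 1)) : Fin n := ⟨(i : ℕ), by have := i.isLt; omega⟩

lemma ntEmb_ne_last {n : ℕ} (i : Fin (n - 1)) : ntEmb i ≠ (⟨n - 1, by have := i.isLt; omega⟩ : Fin n) := by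
  have := i.isLt
  simp only [ntEmb, Ne, Fin.mk.injEq]
  omega

/-- τ as a map on `Fin (n-1)` -/
def ntTauF {n : ℕ} (i : Fin (n - 1)) : Fin (n - 1) :=
  ⟨ntTau n i, by have := i.isLt; unfold ntTau; split <;> omega⟩

lemma ntSig_ntTau (hn : 3 ≤ n) {i : ℕ} (h : i < n - 1) : ntSig n (ntTau n i) = i := by
  unfold ntSig ntTau; split
  · split <;> omega
  · split <;> omega

variable (K n) in
/-- monomial generators -/
noncomputable def ntM (u : ℕ → ℕ → ℕ) (j : Fin (n - 1)) : MvPolynomial (Fin n) K :=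
  X (ntEmb j) ^ (u (ntSig n j) j)

lemma ntF_eq (hn : 3 ≤ n) (u : ℕ → ℕ → ℕ) (i : Fin (n - 1)) :
    ntF K n hn u i = X (ntEmb i) ^ (u (n - 1) i) * ntM K n u i
      - X (⟨n - 1, by omega⟩ : Fin n) ^ (u i (n - 1)) * ntM K n u (ntTauF i) := by
  have hi := i.isLt
  have hτ : ntSig n ((ntTauF i : Fin (n-1)) : ℕ) = (i : ℕ) := ntSig_ntTau hn hi
  unfold ntF ntM ntEmb ntTauF
  rw [ntSig_ntTau hn hi, pow_add]
  ring

lemma val_sub_one (hn : 3 ≤ n) [NeZero (n - 1)] (i : Fin (n - 1)) :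
    ((i - 1 : Fin (n - 1)) : ℕ) = ntTau n (i : ℕ) := by
  have hi := i.isLt
  have h1 : ((1 : Fin (n - 1)) : ℕ) = 1 := by
    rw [Fin.val_one']; exact Nat.mod_eq_of_lt (by omega)
  rw [Fin.sub_def]
  simp only [h1]
  unfold ntTau
  by_cases h : (i : ℕ) = 0
  · rw [if_pos h, h]
    show (n - 1 - 1 + 0) % (n - 1) = n - 2
    rw [Nat.add_zero, Nat.mod_eq_of_lt (by omega)]
    omega
  · rw [if_neg h]
    show (n - 1 - 1 + (i : ℕ)) % (n - 1) = (i : ℕ) - 1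
    have he : n - 1 - 1 + (i : ℕ) = ((i : ℕ) - 1) + (n - 1) := by omega
    rw [he, Nat.add_mod_right, Nat.mod_eq_of_lt (by omega)]

lemma ntTauF_eq_sub (hn : 3 ≤ n) [NeZero (n - 1)] (i : Fin (n - 1)) :
    ntTauF i = i - 1 :=
  Fin.ext (by rw [val_sub_one hn]; rfl)

variable (K) in
lemma ntD_mul_ntM_mem (hn : 3 ≤ n) (u : ℕ → ℕ → ℕ) (j : Fin (n - 1)) :
    ntD K n hn u * ntM K n u j ∈ Ideal.span (Set.range (ntF K n hn u)) := by
  haveI : NeZero (n - 1) := ⟨by omega⟩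
  set J := Ideal.span (Set.range (ntF K n hn u)) with hJ
  set y : Fin n := ⟨n - 1, by omega⟩ with hy
  set a : Fin (n - 1) → ℕ := fun i => u (n - 1) i with ha
  set b : Fin (n - 1) → ℕ := fun i => u i (n - 1) with hb
  set P : MvPolynomial (Fin n) K := ∏ i : Fin (n - 1), X (ntEmb i) ^ a i with hP
  have hrel : ∀ i : Fin (n - 1), X (ntEmb i) ^ a i * ntM K n u i
      = ntF K n hn u i + X y ^ b i * ntM K n u (i - 1) := by
    intro i
    rw [← ntTauF_eq_sub hn i, ntF_eq hn u i]
    ring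
  have hreindex : ∀ g : Fin (n - 1) → MvPolynomial (Fin n) K,
      (∏ l ∈ Finset.range (n - 1), g (j - (l : Fin (n - 1)))) = ∏ i : Fin (n - 1), g i := by
    intro g
    rw [← Fin.prod_univ_eq_prod_range (fun l : ℕ => g (j - (l : Fin (n - 1)))) (n - 1)]
    simp only [Fin.cast_val_eq_self]
    exact Equiv.prod_comp (Equiv.subLeft j) g
  have hreindexS : ∀ g : Fin (n - 1) → ℕ,
      (∑ l ∈ Finset.range (n - 1), g (j - (l : Fin (n - 1)))) = ∑ i : Fin (n - 1), g i := by
    intro g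
    rw [← Fin.sum_univ_eq_sum_range (fun l : ℕ => g (j - (l : Fin (n - 1)))) (n - 1)]
    simp only [Fin.cast_val_eq_self]
    exact Equiv.sum_comp (Equiv.subLeft j) g
  have key : ∀ k : ℕ, k ≤ n - 1 →
      P * ntM K n u j
        - X y ^ (∑ l ∈ Finset.range k, b (j - (l : Fin (n - 1))))
          * ((∏ l ∈ Finset.Ico k (n - 1),
                X (ntEmb (j - (l : Fin (n - 1)))) ^ a (j - (l : Fin (n - 1))))
            * ntM K n u (j - (k : Fin (n - 1)))) ∈ J := by
    intro k
    induction k with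
    | zero =>
      intro _
      have hprod : (∏ l ∈ Finset.Ico 0 (n - 1),
          X (ntEmb (j - (l : Fin (n - 1)))) ^ a (j - (l : Fin (n - 1)))) = P := by
        rw [← Finset.range_eq_Ico]
        exact hreindex (fun i => X (ntEmb i) ^ a i)
      rw [hprod]
      simp
    | succ k ih =>
      intro hk1
      have hk : k < n - 1 := by omega
      have ihk := ih (le_of_lt hk)
      have hsplit : (∏ l ∈ Finset.Ico k (n - 1),
            X (ntEmb (j - (l : Fin (n - 1)))) ^ a (j - (l : Fin (n - 1))))
          = X (ntEmb (j - (k : Fin (n - 1)))) ^ a (j - (k : Fin (n - 1)))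
            * ∏ l ∈ Finset.Ico (k + 1) (n - 1),
                X (ntEmb (j - (l : Fin (n - 1)))) ^ a (j - (l : Fin (n - 1))) :=
        Finset.prod_eq_prod_Ico_succ_bot (M := MvPolynomial (Fin n) K) hk
          (fun l => X (ntEmb (j - (l : Fin (n - 1)))) ^ a (j - (l : Fin (n - 1))))
      have hcast : ((k + 1 : ℕ) : Fin (n - 1)) = (k : Fin (n - 1)) + 1 := by push_cast; ring
      have hBk : (∑ l ∈ Finset.range (k + 1), b (j - (l : Fin (n - 1))))
          = (∑ l ∈ Finset.range k, b (j - (l : Fin (n - 1)))) + b (j - (k : Fin (n - 1)))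
        := Finset.sum_range_succ _ _
      have h2 := hrel (j - (k : Fin (n - 1)))
      have h3 : j - (k : Fin (n - 1)) - 1 = j - ((k : Fin (n - 1)) + 1) := by ring
      rw [h3] at h2
      have hmem : X y ^ (∑ l ∈ Finset.range k, b (j - (l : Fin (n - 1))))
          * ((∏ l ∈ Finset.Ico (k + 1) (n - 1),
                X (ntEmb (j - (l : Fin (n - 1)))) ^ a (j - (l : Fin (n - 1))))
            * ntF K n hn u (j - (k : Fin (n - 1)))) ∈ J :=
        Ideal.mul_mem_left _ _ (Ideal.mul_mem_left _ _ (Ideal.subset_span ⟨_, rfl⟩))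
      have heq : P * ntM K n u j
          - X y ^ (∑ l ∈ Finset.range (k + 1), b (j - (l : Fin (n - 1))))
            * ((∏ l ∈ Finset.Ico (k + 1) (n - 1),
                  X (ntEmb (j - (l : Fin (n - 1)))) ^ a (j - (l : Fin (n - 1))))
              * ntM K n u (j - ((k + 1 : ℕ) : Fin (n - 1))))
          = (P * ntM K n u j
              - X y ^ (∑ l ∈ Finset.range k, b (j - (l : Fin (n - 1))))
                * ((∏ l ∈ Finset.Ico k (n - 1),
                      X (ntEmb (j - (l : Fin (n - 1)))) ^ a (j - (l : Fin (n - 1))))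
                  * ntM K n u (j - (k : Fin (n - 1)))))
            + X y ^ (∑ l ∈ Finset.range k, b (j - (l : Fin (n - 1))))
              * ((∏ l ∈ Finset.Ico (k + 1) (n - 1),
                    X (ntEmb (j - (l : Fin (n - 1)))) ^ a (j - (l : Fin (n - 1))))
                * ntF K n hn u (j - (k : Fin (n - 1)))) := by
        rw [hBk, hcast, hsplit]
        linear_combination (X y ^ (∑ l ∈ Finset.range k, b (j - (l : Fin (n - 1))))
          * (∏ l ∈ Finset.Ico (k + 1) (n - 1),
              X (ntEmb (j - (l : Fin (n - 1)))) ^ a (j - (l : Fin (n - 1))))) * h2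
      rw [heq]
      exact J.add_mem ihk hmem
  have hfin := key (n - 1) le_rfl
  rw [Finset.Ico_self, Finset.prod_empty, Fin.natCast_self, sub_zero, one_mul,
    hreindexS b] at hfin
  have hD : ntD K n hn u = P - X y ^ (∑ i : Fin (n - 1), b i) := rfl
  rw [hD, sub_mul]
  exact hfin

variable (K) in
lemma mem_ntMIdeal_iff (u : ℕ → ℕ → ℕ) (p : MvPolynomial (Fin n) K) :
    p ∈ Ideal.span (Set.range (ntM K n u)) ↔
      ∀ μ ∈ p.support, ∃ j : Fin (n - 1), u (ntSig n (j : ℕ)) j ≤ μ (ntEmb j) := by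
  have hr : Set.range (ntM K n u) = (fun s => (monomial s (1 : K))) ''
      (Set.range fun j : Fin (n - 1) => Finsupp.single (ntEmb j) (u (ntSig n (j : ℕ)) j)) := by
    rw [← Set.range_comp]
    apply congrArg
    funext j
    simp [ntM, Function.comp, X_pow_eq_monomial]
  rw [hr, mem_ideal_span_monomial_image]
  apply forall₂_congr
  intro μ _
  constructor
  · rintro ⟨si, ⟨j, rfl⟩, hle⟩
    exact ⟨j, Finsupp.single_le_iff.1 hle⟩
  · rintro ⟨j, hj⟩
    exact ⟨_, ⟨j, rfl⟩, Finsupp.single_le_iff.2 hj⟩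

variable (K) in
lemma ntD_regular (hn : 3 ≤ n) (u : ℕ → ℕ → ℕ) (hu : ntPos n u) (p : MvPolynomial (Fin n) K)
    (h : p * ntD K n hn u ∈ Ideal.span (Set.range (ntM K n u))) :
    p ∈ Ideal.span (Set.range (ntM K n u)) := by
  rw [mem_ntMIdeal_iff] at h ⊢
  by_contra hc
  push_neg at hc
  obtain ⟨μ0, hμ0, hlow0⟩ := hc
  set y : Fin n := ⟨n - 1, by omega⟩ with hy
  set T := p.support.filter
    (fun μ => ∀ j : Fin (n - 1), μ (ntEmb j) < u (ntSig n (j : ℕ)) j) with hT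
  have hTne : T.Nonempty := ⟨μ0, Finset.mem_filter.2 ⟨hμ0, hlow0⟩⟩
  obtain ⟨μ, hμT, hmax⟩ := T.exists_max_image (fun μ => μ y) hTne
  rw [hT, Finset.mem_filter] at hμT
  obtain ⟨hμs, hlow⟩ := hμT
  set s := ∑ i : Fin (n - 1), u (i : ℕ) (n - 1) with hs
  have hspos : 0 < s := by
    refine Finset.sum_pos (fun i _ => (hu i i.isLt).2.1) ⟨⟨0, by omega⟩, Finset.mem_univ _⟩
  set Pexp : Fin n →₀ ℕ := ∑ i : Fin (n - 1), Finsupp.single (ntEmb i) (u (n - 1) (i : ℕ))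
    with hPe
  have hPy : Pexp y = 0 := by
    rw [hPe, Finsupp.finset_sum_apply]
    refine Finset.sum_eq_zero (fun i _ => ?_)
    rw [Finsupp.single_apply, if_neg (ntEmb_ne_last i)]
  have hmono : ∀ (t : Finset (Fin (n - 1))),
      (∏ i ∈ t, X (ntEmb i) ^ (u (n - 1) (i : ℕ)) : MvPolynomial (Fin n) K)
        = monomial (∑ i ∈ t, Finsupp.single (ntEmb i) (u (n - 1) (i : ℕ))) 1 := by
    intro t
    induction t using Finset.cons_induction with
    | empty => simp
    | cons a t ha ih =>
      rw [Finset.prod_cons, Finset.sum_cons, ih, X_pow_eq_monomial, monomial_mul, one_mul]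
  have hD : ntD K n hn u = monomial Pexp 1 - monomial (Finsupp.single y s) 1 := by
    have h0 : ntD K n hn u
        = (∏ i : Fin (n - 1), X (ntEmb i) ^ (u (n - 1) (i : ℕ))) - X y ^ s := rfl
    rw [h0, hmono, X_pow_eq_monomial, hPe]
  set ν : Fin n →₀ ℕ := μ + Finsupp.single y s with hν
  have hνe : ∀ j : Fin (n - 1), ν (ntEmb j) = μ (ntEmb j) := by
    intro j
    rw [hν, Finsupp.add_apply, Finsupp.single_apply, if_neg (Ne.symm (ntEmb_ne_last j)), add_zero]
  have hνlow : ∀ j : Fin (n - 1), ν (ntEmb j) < u (ntSig n (j : ℕ)) j := by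
    intro j; rw [hνe j]; exact hlow j
  have hνns : ν ∉ (p * ntD K n hn u).support := by
    intro hmem
    obtain ⟨j, hj⟩ := h ν hmem
    exact absurd hj (not_le.2 (hνlow j))
  rw [notMem_support_iff] at hνns
  rw [hD, mul_sub, coeff_sub, coeff_mul_monomial', coeff_mul_monomial'] at hνns
  have hle2 : Finsupp.single y s ≤ ν := by
    rw [hν, Finsupp.single_le_iff, Finsupp.add_apply, Finsupp.single_apply, if_pos rfl]
    omega
  have hνμ : ν - Finsupp.single y s = μ := by rw [hν]; exact add_tsub_cancel_right _ _
  rw [if_pos hle2, hνμ] at hνns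
  simp only [mul_one] at hνns
  by_cases hPle : Pexp ≤ ν
  · rw [if_pos hPle, sub_eq_zero] at hνns
    have hmem2 : ν - Pexp ∈ p.support := by
      rw [mem_support_iff, hνns]; exact mem_support_iff.1 hμs
    have hlow2 : ∀ j : Fin (n - 1), (ν - Pexp) (ntEmb j) < u (ntSig n (j : ℕ)) j := by
      intro j
      exact lt_of_le_of_lt (by rw [Finsupp.tsub_apply]; exact Nat.sub_le _ _) (hνlow j)
    have hin : ν - Pexp ∈ T := Finset.mem_filter.2 ⟨hmem2, hlow2⟩
    have h1 := hmax _ hin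
    have h2 : (ν - Pexp) y = μ y + s := by
      rw [Finsupp.tsub_apply, hPy, hν, Finsupp.add_apply, Finsupp.single_apply, if_pos rfl]
      omega
    simp only [h2] at h1
    omega
  · rw [if_neg hPle, zero_sub, neg_eq_zero] at hνns
    exact absurd hνns (mem_support_iff.1 hμs)

end Aux

/-- for a critical ideal of Northcott type `I = ⟨f_1,…,f_{n-1},D⟩` one has
`⟨f_1,…,f_{n-1}⟩ = I ∩ ⟨m⟩`, where `⟨m⟩` is the monomial ideal generated by the entries
`x_j^{u_{σ(j),j}}` of `m`. -/
theorem northcott_complete_intersection_link {K : Type*} [Field K] (n : ℕ) (hn : 3 ≤ n)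
    (u : ℕ → ℕ → ℕ) (hu : ntPos n u) :
    Ideal.span (Set.range (ntF K n hn u))
      = ntIdeal K n hn u ⊓
        Ideal.span (Set.range fun j : Fin (n - 1) =>
          (X (⟨(j : ℕ), by have := j.isLt; omega⟩ : Fin n) : MvPolynomial (Fin n) K)
            ^ (u (ntSig n j) j)) := by
  haveI : NeZero (n - 1) := ⟨by omega⟩
  have hJM : Ideal.span (Set.range (ntF K n hn u)) ≤ Ideal.span (Set.range (ntM K n u)) := by
    rw [Ideal.span_le]
    rintro _ ⟨i, rfl⟩
    rw [ntF_eq hn u i]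
    exact sub_mem (Ideal.mul_mem_left _ _ (Ideal.subset_span ⟨i, rfl⟩))
      (Ideal.mul_mem_left _ _ (Ideal.subset_span ⟨ntTauF i, rfl⟩))
  have hDM : ∀ r ∈ Ideal.span (Set.range (ntM K n u)),
      r * ntD K n hn u ∈ Ideal.span (Set.range (ntF K n hn u)) := by
    intro r hr
    induction hr using Submodule.span_induction with
    | mem x hx =>
      obtain ⟨j, rfl⟩ := hx
      rw [mul_comm]
      exact ntD_mul_ntM_mem K hn u j
    | zero => simp
    | add x y hx hy ihx ihy => rw [add_mul]; exact add_mem ihx ihy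
    | smul a x hx ihx =>
      rw [smul_mul_assoc]
      exact Submodule.smul_mem _ _ ihx
  show Ideal.span (Set.range (ntF K n hn u))
    = ntIdeal K n hn u ⊓ Ideal.span (Set.range (ntM K n u))
  apply le_antisymm
  · exact le_inf (Ideal.span_mono Set.subset_union_left) hJM
  · intro p hp
    rw [Submodule.mem_inf] at hp
    obtain ⟨hI, hM⟩ := hp
    rw [ntIdeal, Ideal.span_union, Submodule.mem_sup] at hI
    obtain ⟨g, hg, w, hw, rfl⟩ := hI
    rw [Ideal.mem_span_singleton'] at hw
    obtain ⟨r, rfl⟩ := hw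
    refine add_mem hg ?_
    have h1 : r * ntD K n hn u ∈ Ideal.span (Set.range (ntM K n u)) := by
      have he : r * ntD K n hn u = (g + r * ntD K n hn u) - g := by ring
      rw [he]
      exact sub_mem hM (hJM hg)
    exact hDM r (ntD_regular K hn u hu r h1)
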